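/- Every feasible solution of the counterexample instance has cost at least 7. (Together with the exhibited cost-7 solution, this shows the optimal value of the counterexample instance equals 7.) -/

import Mathlib

/-- The counterexample graph of the paper's Theorem 2: the 4-cycle `0-1-2-3-0` together
with the chord `{0,2}` (vertices `0,1,2,3` stand for the paper's vertices `1,2,3,4`;
the depot is vertex `0`; the missing edge `{1,3}` is the paper's `{2,4}`). -/
def CG : SimpleGraph (Fin 4) where
  Adj a b := a ≠ b ∧ s(a, b) ≠ s(1, 3)
  symm := by
    constructor
    intro a b h
    exact ⟨h.1.symm, by rw [Sym2.eq_swap]; exact h.2⟩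
  loopless := by
    constructor
    intro a h
    exact h.1 rfl

instance : DecidableRel CG.Adj := fun a b =>
  decidable_of_iff (a ≠ b ∧ s(a, b) ≠ s(1, 3)) Iff.rfl

/-- Demands: `12` on the edge `{1,2}` (the paper's `{2,3}`) and `1` on every other edge. -/
noncomputable def Dem : Sym2 (Fin 4) → ℝ := fun e => if e = s(1, 2) then 12 else 1

/-- A feasible solution: a finite family of closed walks at the depot `0` together with
nonnegative sprays `y r e`, where `y r e > 0` only if robot `r`'s walk traverses `e`,
each robot sprays at most the capacity `8` in total, and the total spray on each edge
equals its demand. -/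
def Feasible {R : ℕ} (walk : Fin R → CG.Walk 0 0)
    (y : Fin R → Sym2 (Fin 4) → ℝ) : Prop :=
  (∀ r e, 0 ≤ y r e) ∧
  (∀ r e, 0 < y r e → e ∈ (walk r).edges) ∧
  (∀ r, ∑ e ∈ CG.edgeFinset, y r e ≤ 8) ∧
  (∀ e ∈ CG.edgeSet, ∑ r, y r e = Dem e)

/-- Every feasible solution of the counterexample instance has cost at least `7`. -/
lemma support_card_le (w : CG.Walk 0 0) (hw : ¬ w.Nil) :
    w.support.toFinset.card ≤ w.length := by
  cases w with
  | nil => simp at hw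
  | @cons _ x _ h w' =>
    have h0 : (0 : Fin 4) ∈ w'.support := w'.end_mem_support
    have : (SimpleGraph.Walk.cons h w').support.toFinset = w'.support.toFinset := by
      rw [SimpleGraph.Walk.support_cons, List.toFinset_cons,
        Finset.insert_eq_self]
      exact List.mem_toFinset.mpr h0
    rw [this, SimpleGraph.Walk.length_cons]
    calc w'.support.toFinset.card ≤ w'.support.length := List.toFinset_card_le _
      _ = w'.length + 1 := w'.length_support

lemma len_ge (w : CG.Walk 0 0) (s : Finset (Fin 4))
    (hs : ∀ v ∈ s, v ∈ w.support) (hne : ¬ w.Nil) : s.card ≤ w.length := by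
  have hsub : s ⊆ w.support.toFinset := fun v hv => List.mem_toFinset.mpr (hs v hv)
  exact le_trans (Finset.card_le_card hsub) (support_card_le w hne)

lemma not_nil_of_edge {e} (w : CG.Walk 0 0) (he : e ∈ w.edges) : ¬ w.Nil := by
  intro h
  cases w with
  | nil => simp at he
  | cons _ _ => simp [SimpleGraph.Walk.Nil] at h

lemma len3_of_12 (w : CG.Walk 0 0) (he : s(1, 2) ∈ w.edges) : 3 ≤ w.length := by
  have h1 := SimpleGraph.Walk.fst_mem_support_of_mem_edges w he
  have h2 := SimpleGraph.Walk.snd_mem_support_of_mem_edges w he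
  have h0 := w.start_mem_support
  have := len_ge w {0, 1, 2} (by intro v hv; fin_cases hv <;> assumption)
    (not_nil_of_edge w he)
  simpa using this

lemma len3_of_23 (w : CG.Walk 0 0) (he : s(2, 3) ∈ w.edges) : 3 ≤ w.length := by
  have h1 := SimpleGraph.Walk.fst_mem_support_of_mem_edges w he
  have h2 := SimpleGraph.Walk.snd_mem_support_of_mem_edges w he
  have h0 := w.start_mem_support
  have := len_ge w {0, 2, 3} (by intro v hv; fin_cases hv <;> assumption)
    (not_nil_of_edge w he)
  simpa using this

lemma len4_of_both (w : CG.Walk 0 0) (he : s(1, 2) ∈ w.edges)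
    (he' : s(2, 3) ∈ w.edges) : 4 ≤ w.length := by
  have h1 := SimpleGraph.Walk.fst_mem_support_of_mem_edges w he
  have h2 := SimpleGraph.Walk.snd_mem_support_of_mem_edges w he
  have h3 := SimpleGraph.Walk.snd_mem_support_of_mem_edges w he'
  have h0 := w.start_mem_support
  have := len_ge w {0, 1, 2, 3} (by intro v hv; fin_cases hv <;> assumption)
    (not_nil_of_edge w he)
  simpa using this
theorem counterexample_cost_lower_bound_seven
    (R : ℕ) (walk : Fin R → CG.Walk 0 0) (y : Fin R → Sym2 (Fin 4) → ℝ)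
    (hfeas : Feasible walk y) :
    7 ≤ ∑ r, (walk r).length := by
  obtain ⟨hy0, hye, hcap, hdem⟩ := hfeas
  have h12 : s((1 : Fin 4), 2) ∈ CG.edgeSet := CG.mem_edgeSet.mpr (by decide)
  have h23 : s((2 : Fin 4), 3) ∈ CG.edgeSet := CG.mem_edgeSet.mpr (by decide)
  have h12f : s((1 : Fin 4), 2) ∈ CG.edgeFinset := SimpleGraph.mem_edgeFinset.mpr h12
  have hsum12 : ∑ r, y r s(1, 2) = 12 := by rw [hdem _ h12]; simp [Dem]
  have hsum23 : ∑ r, y r s(2, 3) = 1 := by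
    rw [hdem _ h23]
    simp only [Dem, if_neg (by decide : s((2 : Fin 4), 3) ≠ s(1, 2))]
  have hle8 : ∀ r, y r s(1, 2) ≤ 8 := fun r =>
    le_trans (Finset.single_le_sum (fun e _ => hy0 r e) h12f) (hcap r)
  set S := Finset.univ.filter (fun r => 0 < y r s(1, 2)) with hS
  have hsumS : ∑ r ∈ S, y r s(1, 2) = 12 := by
    rw [← hsum12]
    apply Finset.sum_subset (Finset.filter_subset _ _)
    intro r _ hr
    simp only [hS, Finset.mem_filter, Finset.mem_univ, true_and, not_lt] at hr
    exact le_antisymm hr (hy0 r _)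
  have hcard : 2 ≤ S.card := by
    by_contra h
    push_neg at h
    have h1 : ∑ r ∈ S, y r s(1, 2) ≤ ∑ r ∈ S, (8 : ℝ) :=
      Finset.sum_le_sum (fun r _ => hle8 r)
    rw [Finset.sum_const, nsmul_eq_mul, hsumS] at h1
    have : (S.card : ℝ) ≤ 1 := by exact_mod_cast Nat.lt_succ_iff.mp h
    nlinarith
  have hex : ∃ r0, 0 < y r0 s(2, 3) := by
    by_contra h
    push_neg at h
    have : ∑ r, y r s(2, 3) ≤ 0 := Finset.sum_nonpos (fun r _ => h r)
    linarith
  obtain ⟨r0, hr0⟩ := hex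
  have hr0e : s((2 : Fin 4), 3) ∈ (walk r0).edges := hye r0 _ hr0
  by_cases hc : 0 < y r0 s(1, 2)
  · have hr0S : r0 ∈ S := by simp [hS, hc]
    obtain ⟨r1, hr1S, hne⟩ := Finset.exists_mem_ne (s := S) (by omega) r0
    have l0 : 4 ≤ (walk r0).length := len4_of_both _ (hye r0 _ hc) hr0e
    have hr1pos : 0 < y r1 s(1, 2) := (Finset.mem_filter.mp hr1S).2
    have l1 : 3 ≤ (walk r1).length := len3_of_12 _ (hye r1 _ hr1pos)
    calc 7 ≤ (walk r0).length + (walk r1).length := by omega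
      _ = ∑ r ∈ {r0, r1}, (walk r).length := (Finset.sum_pair (f := fun r => (walk r).length) hne.symm).symm
      _ ≤ ∑ r, (walk r).length := Finset.sum_le_sum_of_subset (Finset.subset_univ _)
  · obtain ⟨r1, hr1, r2, hr2, hne12⟩ := Finset.one_lt_card.mp (by omega : 1 < S.card)
    have hr1pos : 0 < y r1 s(1, 2) := (Finset.mem_filter.mp hr1).2
    have hr2pos : 0 < y r2 s(1, 2) := (Finset.mem_filter.mp hr2).2
    have l0 : 3 ≤ (walk r0).length := len3_of_23 _ hr0e
    have l1 : 3 ≤ (walk r1).length := len3_of_12 _ (hye r1 _ hr1pos)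
    have l2 : 3 ≤ (walk r2).length := len3_of_12 _ (hye r2 _ hr2pos)
    have hn1 : r0 ≠ r1 := fun h => hc (h ▸ hr1pos)
    have hn2 : r0 ≠ r2 := fun h => hc (h ▸ hr2pos)
    have hnot : r0 ∉ ({r1, r2} : Finset (Fin R)) := by simp [hn1, hn2]
    calc 7 ≤ (walk r0).length + ((walk r1).length + (walk r2).length) := by omega
      _ = ∑ r ∈ insert r0 {r1, r2}, (walk r).length := by
          rw [Finset.sum_insert hnot, Finset.sum_pair hne12]
      _ ≤ ∑ r, (walk r).length := Finset.sum_le_sum_of_subset (Finset.subset_univ _)
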